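/- The Heawood graph has distinguishing number 2. -/

import Mathlib

/-- A coloring `c` of the vertices of `G` is distinguishing if the only
color-preserving automorphism of `G` is the identity. -/
def SimpleGraph.IsDistinguishing {V α : Type*} (G : SimpleGraph V) (c : V → α) : Prop :=
  ∀ φ : G ≃g G, (∀ v, c (φ v) = c v) → ∀ v, φ v = v

/-- The distinguishing number of a graph: the least `k` such that some
`k`-coloring of the vertices is preserved only by the identity automorphism. -/
noncomputable def SimpleGraph.distinguishingNumber {V : Type*} (G : SimpleGraph V) : ℕ :=
  sInf {k : ℕ | ∃ c : V → Fin k, G.IsDistinguishing c}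

/-- The Heawood graph: the point-line incidence graph of the Fano plane, realized
via the perfect difference set `{0, 1, 3}` modulo 7 (point `p` lies on line `l`
iff `l - p ∈ {0, 1, 3}`). -/
def heawood : SimpleGraph (ZMod 7 ⊕ ZMod 7) :=
  SimpleGraph.fromRel (fun a b => ∃ p l : ZMod 7,
    a = Sum.inl p ∧ b = Sum.inr l ∧ (l - p = 0 ∨ l - p = 1 ∨ l - p = 3))

instance : DecidableRel heawood.Adj := fun a b =>
  decidable_of_iff' _ (SimpleGraph.fromRel_adj _ a b)

/-- The distinguishing 2-coloring: white = {L0,L1,L2,L3,R0,R2}. -/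
def cD : ZMod 7 ⊕ ZMod 7 → Fin 2 := fun v =>
  if v = Sum.inl 0 ∨ v = Sum.inl 1 ∨ v = Sum.inl 2 ∨ v = Sum.inl 3 ∨
     v = Sum.inr 0 ∨ v = Sum.inr 2 then 0 else 1

/-- Number of white neighbors. -/
def wdeg (v : ZMod 7 ⊕ ZMod 7) : ℕ :=
  (Finset.univ.filter (fun w => heawood.Adj v w ∧ cD w = 0)).card

set_option synthInstance.maxSize 4000 in
set_option synthInstance.maxHeartbeats 2000000 in
set_option maxHeartbeats 2000000 in
lemma cD_distinguishing : heawood.IsDistinguishing cD := by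
  intro φ hc
  have key : ∀ v, wdeg (φ v) = wdeg v := by
    intro v
    unfold wdeg
    refine Finset.card_nbij' (fun w => φ.symm w) (fun w => φ w) ?_ ?_ ?_ ?_
    · intro a ha
      simp only [Finset.mem_coe, Finset.mem_filter, Finset.mem_univ, true_and] at ha ⊢
      constructor
      · have h2 : heawood.Adj (φ.symm (φ v)) (φ.symm a) := φ.symm.map_adj_iff.mpr ha.1
        rwa [φ.symm_apply_apply] at h2
      · have h3 := hc (φ.symm a)
        rw [φ.apply_symm_apply] at h3
        rw [← h3]; exact ha.2
    · intro a ha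
      simp only [Finset.mem_coe, Finset.mem_filter, Finset.mem_univ, true_and] at ha ⊢
      exact ⟨φ.map_adj_iff.mpr ha.1, by rw [hc]; exact ha.2⟩
    · intro a _; exact φ.apply_symm_apply a
    · intro a _; exact φ.symm_apply_apply a
  have hadj : ∀ x v, φ x = x → (heawood.Adj (φ v) x ↔ heawood.Adj v x) := by
    intro x v hx
    conv_lhs => rw [← hx]
    exact φ.map_adj_iff
  have hne : ∀ x v, φ x = x → v ≠ x → φ v ≠ x := by
    intro x v hx hvx h
    exact hvx (φ.injective (h.trans hx.symm))
  have h3 : φ (Sum.inl (3 : ZMod 7)) = (Sum.inl (3 : ZMod 7)) :=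
    (by decide : ∀ u, cD u = cD (Sum.inl (3 : ZMod 7)) → wdeg u = wdeg (Sum.inl (3 : ZMod 7)) → u = (Sum.inl (3 : ZMod 7))) (φ (Sum.inl (3 : ZMod 7))) (hc (Sum.inl (3 : ZMod 7))) (key (Sum.inl (3 : ZMod 7)))
  have h5 : φ (Sum.inl (5 : ZMod 7)) = (Sum.inl (5 : ZMod 7)) :=
    (by decide : ∀ u, wdeg u = wdeg (Sum.inl (5 : ZMod 7)) → u ≠ (Sum.inl (3 : ZMod 7)) → u = (Sum.inl (5 : ZMod 7))) (φ (Sum.inl (5 : ZMod 7))) (key (Sum.inl (5 : ZMod 7))) (hne (Sum.inl (3 : ZMod 7)) (Sum.inl (5 : ZMod 7)) h3 (by decide))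
  have h4 : φ (Sum.inl (4 : ZMod 7)) = (Sum.inl (4 : ZMod 7)) :=
    (by decide : ∀ u, cD u = cD (Sum.inl (4 : ZMod 7)) → wdeg u = wdeg (Sum.inl (4 : ZMod 7)) → (heawood.Adj u (Sum.inl (5 : ZMod 7)) ↔ heawood.Adj (Sum.inl (4 : ZMod 7)) (Sum.inl (5 : ZMod 7))) → u = (Sum.inl (4 : ZMod 7))) (φ (Sum.inl (4 : ZMod 7))) (hc (Sum.inl (4 : ZMod 7))) (key (Sum.inl (4 : ZMod 7))) (hadj (Sum.inl (5 : ZMod 7)) (Sum.inl (4 : ZMod 7)) h5)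
  have h6 : φ (Sum.inl (6 : ZMod 7)) = (Sum.inl (6 : ZMod 7)) :=
    (by decide : ∀ u, cD u = cD (Sum.inl (6 : ZMod 7)) → (heawood.Adj u (Sum.inl (3 : ZMod 7)) ↔ heawood.Adj (Sum.inl (6 : ZMod 7)) (Sum.inl (3 : ZMod 7))) → u ≠ (Sum.inl (5 : ZMod 7)) → (heawood.Adj u (Sum.inl (5 : ZMod 7)) ↔ heawood.Adj (Sum.inl (6 : ZMod 7)) (Sum.inl (5 : ZMod 7))) → u ≠ (Sum.inl (4 : ZMod 7)) → u = (Sum.inl (6 : ZMod 7))) (φ (Sum.inl (6 : ZMod 7))) (hc (Sum.inl (6 : ZMod 7))) (hadj (Sum.inl (3 : ZMod 7)) (Sum.inl (6 : ZMod 7)) h3) (hne (Sum.inl (5 : ZMod 7)) (Sum.inl (6 : ZMod 7)) h5 (by decide)) (hadj (Sum.inl (5 : ZMod 7)) (Sum.inl (6 : ZMod 7)) h5) (hne (Sum.inl (4 : ZMod 7)) (Sum.inl (6 : ZMod 7)) h4 (by decide))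
  have h7 : φ (Sum.inr (0 : ZMod 7)) = (Sum.inr (0 : ZMod 7)) :=
    (by decide : ∀ u, (heawood.Adj u (Sum.inl (4 : ZMod 7)) ↔ heawood.Adj (Sum.inr (0 : ZMod 7)) (Sum.inl (4 : ZMod 7))) → (heawood.Adj u (Sum.inl (6 : ZMod 7)) ↔ heawood.Adj (Sum.inr (0 : ZMod 7)) (Sum.inl (6 : ZMod 7))) → u = (Sum.inr (0 : ZMod 7))) (φ (Sum.inr (0 : ZMod 7))) (hadj (Sum.inl (4 : ZMod 7)) (Sum.inr (0 : ZMod 7)) h4) (hadj (Sum.inl (6 : ZMod 7)) (Sum.inr (0 : ZMod 7)) h6)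
  have h0 : φ (Sum.inl (0 : ZMod 7)) = (Sum.inl (0 : ZMod 7)) :=
    (by decide : ∀ u, u ≠ (Sum.inl (4 : ZMod 7)) → u ≠ (Sum.inl (6 : ZMod 7)) → (heawood.Adj u (Sum.inr (0 : ZMod 7)) ↔ heawood.Adj (Sum.inl (0 : ZMod 7)) (Sum.inr (0 : ZMod 7))) → u = (Sum.inl (0 : ZMod 7))) (φ (Sum.inl (0 : ZMod 7))) (hne (Sum.inl (4 : ZMod 7)) (Sum.inl (0 : ZMod 7)) h4 (by decide)) (hne (Sum.inl (6 : ZMod 7)) (Sum.inl (0 : ZMod 7)) h6 (by decide)) (hadj (Sum.inr (0 : ZMod 7)) (Sum.inl (0 : ZMod 7)) h7)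
  have h8 : φ (Sum.inr (1 : ZMod 7)) = (Sum.inr (1 : ZMod 7)) :=
    (by decide : ∀ u, (heawood.Adj u (Sum.inl (5 : ZMod 7)) ↔ heawood.Adj (Sum.inr (1 : ZMod 7)) (Sum.inl (5 : ZMod 7))) → (heawood.Adj u (Sum.inl (0 : ZMod 7)) ↔ heawood.Adj (Sum.inr (1 : ZMod 7)) (Sum.inl (0 : ZMod 7))) → u = (Sum.inr (1 : ZMod 7))) (φ (Sum.inr (1 : ZMod 7))) (hadj (Sum.inl (5 : ZMod 7)) (Sum.inr (1 : ZMod 7)) h5) (hadj (Sum.inl (0 : ZMod 7)) (Sum.inr (1 : ZMod 7)) h0)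
  have h1 : φ (Sum.inl (1 : ZMod 7)) = (Sum.inl (1 : ZMod 7)) :=
    (by decide : ∀ u, u ≠ (Sum.inl (5 : ZMod 7)) → u ≠ (Sum.inl (0 : ZMod 7)) → (heawood.Adj u (Sum.inr (1 : ZMod 7)) ↔ heawood.Adj (Sum.inl (1 : ZMod 7)) (Sum.inr (1 : ZMod 7))) → u = (Sum.inl (1 : ZMod 7))) (φ (Sum.inl (1 : ZMod 7))) (hne (Sum.inl (5 : ZMod 7)) (Sum.inl (1 : ZMod 7)) h5 (by decide)) (hne (Sum.inl (0 : ZMod 7)) (Sum.inl (1 : ZMod 7)) h0 (by decide)) (hadj (Sum.inr (1 : ZMod 7)) (Sum.inl (1 : ZMod 7)) h8)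
  have h2 : φ (Sum.inl (2 : ZMod 7)) = (Sum.inl (2 : ZMod 7)) :=
    (by decide : ∀ u, u ≠ (Sum.inl (3 : ZMod 7)) → (heawood.Adj u (Sum.inl (4 : ZMod 7)) ↔ heawood.Adj (Sum.inl (2 : ZMod 7)) (Sum.inl (4 : ZMod 7))) → (heawood.Adj u (Sum.inl (6 : ZMod 7)) ↔ heawood.Adj (Sum.inl (2 : ZMod 7)) (Sum.inl (6 : ZMod 7))) → (heawood.Adj u (Sum.inr (0 : ZMod 7)) ↔ heawood.Adj (Sum.inl (2 : ZMod 7)) (Sum.inr (0 : ZMod 7))) → (heawood.Adj u (Sum.inl (0 : ZMod 7)) ↔ heawood.Adj (Sum.inl (2 : ZMod 7)) (Sum.inl (0 : ZMod 7))) → (heawood.Adj u (Sum.inr (1 : ZMod 7)) ↔ heawood.Adj (Sum.inl (2 : ZMod 7)) (Sum.inr (1 : ZMod 7))) → u = (Sum.inl (2 : ZMod 7))) (φ (Sum.inl (2 : ZMod 7))) (hne (Sum.inl (3 : ZMod 7)) (Sum.inl (2 : ZMod 7)) h3 (by decide)) (hadj (Sum.inl (4 : ZMod 7)) (Sum.inl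 (2 : ZMod 7)) h4) (hadj (Sum.inl (6 : ZMod 7)) (Sum.inl (2 : ZMod 7)) h6) (hadj (Sum.inr (0 : ZMod 7)) (Sum.inl (2 : ZMod 7)) h7) (hadj (Sum.inl (0 : ZMod 7)) (Sum.inl (2 : ZMod 7)) h0) (hadj (Sum.inr (1 : ZMod 7)) (Sum.inl (2 : ZMod 7)) h8)
  have h9 : φ (Sum.inr (2 : ZMod 7)) = (Sum.inr (2 : ZMod 7)) :=
    (by decide : ∀ u, (heawood.Adj u (Sum.inl (1 : ZMod 7)) ↔ heawood.Adj (Sum.inr (2 : ZMod 7)) (Sum.inl (1 : ZMod 7))) → (heawood.Adj u (Sum.inl (2 : ZMod 7)) ↔ heawood.Adj (Sum.inr (2 : ZMod 7)) (Sum.inl (2 : ZMod 7))) → u = (Sum.inr (2 : ZMod 7))) (φ (Sum.inr (2 : ZMod 7))) (hadj (Sum.inl (1 : ZMod 7)) (Sum.inr (2 : ZMod 7)) h1) (hadj (Sum.inl (2 : ZMod 7)) (Sum.inr (2 : ZMod 7)) h2)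
  have h10 : φ (Sum.inr (3 : ZMod 7)) = (Sum.inr (3 : ZMod 7)) :=
    (by decide : ∀ u, (heawood.Adj u (Sum.inl (0 : ZMod 7)) ↔ heawood.Adj (Sum.inr (3 : ZMod 7)) (Sum.inl (0 : ZMod 7))) → (heawood.Adj u (Sum.inl (2 : ZMod 7)) ↔ heawood.Adj (Sum.inr (3 : ZMod 7)) (Sum.inl (2 : ZMod 7))) → u = (Sum.inr (3 : ZMod 7))) (φ (Sum.inr (3 : ZMod 7))) (hadj (Sum.inl (0 : ZMod 7)) (Sum.inr (3 : ZMod 7)) h0) (hadj (Sum.inl (2 : ZMod 7)) (Sum.inr (3 : ZMod 7)) h2)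
  have h11 : φ (Sum.inr (4 : ZMod 7)) = (Sum.inr (4 : ZMod 7)) :=
    (by decide : ∀ u, u ≠ (Sum.inr (1 : ZMod 7)) → (heawood.Adj u (Sum.inl (1 : ZMod 7)) ↔ heawood.Adj (Sum.inr (4 : ZMod 7)) (Sum.inl (1 : ZMod 7))) → u ≠ (Sum.inr (2 : ZMod 7)) → u = (Sum.inr (4 : ZMod 7))) (φ (Sum.inr (4 : ZMod 7))) (hne (Sum.inr (1 : ZMod 7)) (Sum.inr (4 : ZMod 7)) h8 (by decide)) (hadj (Sum.inl (1 : ZMod 7)) (Sum.inr (4 : ZMod 7)) h1) (hne (Sum.inr (2 : ZMod 7)) (Sum.inr (4 : ZMod 7)) h9 (by decide))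
  have h12 : φ (Sum.inr (5 : ZMod 7)) = (Sum.inr (5 : ZMod 7)) :=
    (by decide : ∀ u, (heawood.Adj u (Sum.inl (2 : ZMod 7)) ↔ heawood.Adj (Sum.inr (5 : ZMod 7)) (Sum.inl (2 : ZMod 7))) → u ≠ (Sum.inr (2 : ZMod 7)) → u ≠ (Sum.inr (3 : ZMod 7)) → u = (Sum.inr (5 : ZMod 7))) (φ (Sum.inr (5 : ZMod 7))) (hadj (Sum.inl (2 : ZMod 7)) (Sum.inr (5 : ZMod 7)) h2) (hne (Sum.inr (2 : ZMod 7)) (Sum.inr (5 : ZMod 7)) h9 (by decide)) (hne (Sum.inr (3 : ZMod 7)) (Sum.inr (5 : ZMod 7)) h10 (by decide))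
  have h13 : φ (Sum.inr (6 : ZMod 7)) = (Sum.inr (6 : ZMod 7)) :=
    (by decide : ∀ u, (heawood.Adj u (Sum.inl (0 : ZMod 7)) ↔ heawood.Adj (Sum.inr (6 : ZMod 7)) (Sum.inl (0 : ZMod 7))) → u ≠ (Sum.inr (2 : ZMod 7)) → (heawood.Adj u (Sum.inr (2 : ZMod 7)) ↔ heawood.Adj (Sum.inr (6 : ZMod 7)) (Sum.inr (2 : ZMod 7))) → (heawood.Adj u (Sum.inr (3 : ZMod 7)) ↔ heawood.Adj (Sum.inr (6 : ZMod 7)) (Sum.inr (3 : ZMod 7))) → u ≠ (Sum.inr (4 : ZMod 7)) → u ≠ (Sum.inr (5 : ZMod 7)) → (heawood.Adj u (Sum.inr (5 : ZMod 7)) ↔ heawood.Adj (Sum.inr (6 : ZMod 7)) (Sum.inr (5 : ZMod 7))) → u = (Sum.inr (6 : ZMod 7))) (φ (Sum.inr (6 : ZMod 7))) (hadj (Sum.inl (0 : ZMod 7)) (Sum.inr (6 : ZMod 7)) h0) (hne (Sum.inr (2 : ZMod 7)) (Sum.inr (6 : ZMod 7)) h9 (by decide)) (hadj (Sum.inr (2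 : ZMod 7)) (Sum.inr (6 : ZMod 7)) h9) (hadj (Sum.inr (3 : ZMod 7)) (Sum.inr (6 : ZMod 7)) h10) (hne (Sum.inr (4 : ZMod 7)) (Sum.inr (6 : ZMod 7)) h11 (by decide)) (hne (Sum.inr (5 : ZMod 7)) (Sum.inr (6 : ZMod 7)) h12 (by decide)) (hadj (Sum.inr (5 : ZMod 7)) (Sum.inr (6 : ZMod 7)) h12)
  intro v
  rcases v with p | p <;> fin_cases p
  · exact h0
  · exact h1
  · exact h2
  · exact h3
  · exact h4
  · exact h5
  · exact h6
  · exact h7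
  · exact h8
  · exact h9
  · exact h10
  · exact h11
  · exact h12
  · exact h13

def heawoodShift : heawood ≃g heawood where
  toFun := Sum.map (· + 1) (· + 1)
  invFun := Sum.map (· - 1) (· - 1)
  left_inv := by decide
  right_inv := by decide
  map_rel_iff' := by intro a b; revert a b; decide

/-- The Heawood graph has distinguishing number 2. -/
theorem distinguishingNumber_heawood : heawood.distinguishingNumber = 2 := by
  have h2 : 2 ∈ {k : ℕ | ∃ c : (ZMod 7 ⊕ ZMod 7) → Fin k, heawood.IsDistinguishing c} :=
    ⟨cD, cD_distinguishing⟩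
  refine le_antisymm (Nat.sInf_le h2) (le_csInf ⟨2, h2⟩ ?_)
  rintro k ⟨c, hk⟩
  by_contra hlt
  push_neg at hlt
  interval_cases k
  · exact (c (Sum.inl 0)).elim0
  · have h1 := hk heawoodShift (fun v => Subsingleton.elim _ _) (Sum.inl 0)
    exact absurd h1 (by decide)
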